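/- Let D be a probability measure on 𝒵, let K be a Markov kernel from 𝒵^n (= Fin n → 𝒵) to 𝒲, and let ℓ : 𝒲 × 𝒵 → ℝ be bounded and measurable. For S = (Z_1, …, Z_n) with the Z_j i.i.d. with law D, W distributed as K(S), and for each i an independent fresh example Z_i' ~ D, let S^i denote S with its i-th coordinate replaced by Z_i'. Define R(w) = ∫ ℓ(w, z) dD(z) and R_S(w) = (1/n) Σ_j ℓ(w, S j). Then E_{S, W~K(S)}[R(W) − R_S(W)] = (1/n) Σ_{i=1}^{n} E_{S, Z_i'} [ ∫ ℓ(w, Z_i') dK(S)(w) − ∫ ℓ(w, Z_i') dK(S^i)(w) ]. -/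

import Mathlib

open MeasureTheory ProbabilityTheory
open scoped ENNReal NNReal

/-- A bounded a.e.-strongly measurable real function is integrable w.r.t. any finite measure. -/
lemma integrable_of_abs_bound {α : Type*} [MeasurableSpace α] (μ : Measure α) [IsFiniteMeasure μ]
    {f : α → ℝ} (hf : AEStronglyMeasurable f μ) (C : ℝ) (h : ∀ x, |f x| ≤ C) :
    Integrable f μ :=
  ⟨hf, HasFiniteIntegral.of_bounded (C := C) (ae_of_all _ fun x => by
    simpa [Real.norm_eq_abs] using h x)⟩

/-- For a probability measure, the norm of an integral of a `C`-bounded function is ≤ `C`. -/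
lemma abs_integral_le_of_bound {α : Type*} [MeasurableSpace α] (μ : Measure α)
    [IsProbabilityMeasure μ] {f : α → ℝ} (C : ℝ) (h : ∀ x, |f x| ≤ C) :
    |∫ x, f x ∂μ| ≤ C := by
  have := norm_integral_le_of_norm_le_const (μ := μ) (f := f) (C := C)
    (ae_of_all _ fun x => by simpa [Real.norm_eq_abs] using h x)
  simpa [Real.norm_eq_abs, measure_univ] using this

/-- Replacing the `i`-th coordinate of an i.i.d. sample by an independent fresh sample is
measure preserving. -/
lemma measurePreserving_replace_one {𝒵 : Type*} [MeasurableSpace 𝒵]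
    (D : Measure 𝒵) [IsProbabilityMeasure D] {n : ℕ} (i : Fin n) :
    Measure.map (fun p : (Fin n → 𝒵) × 𝒵 => Function.update p.1 i p.2)
      ((Measure.pi fun _ : Fin n => D).prod D) = Measure.pi (fun _ : Fin n => D) := by
  classical
  have hu : Measurable (fun p : (Fin n → 𝒵) × 𝒵 => Function.update p.1 i p.2) :=
    measurable_update'
  refine (Measure.pi_eq fun A hA => ?_).symm
  rw [Measure.map_apply hu (MeasurableSet.univ_pi hA)]
  have hpre : (fun p : (Fin n → 𝒵) × 𝒵 => Function.update p.1 i p.2) ⁻¹' Set.pi Set.univ A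
      = (Set.pi Set.univ (Function.update A i Set.univ)) ×ˢ (A i) := by
    ext ⟨s, z⟩
    simp only [Set.mem_preimage, Set.mem_pi, Set.mem_univ, forall_true_left, Set.mem_prod]
    constructor
    · intro h
      refine ⟨fun j => ?_, by simpa using h i⟩
      rcases eq_or_ne j i with rfl | hj
      · simp
      · simpa [Function.update_of_ne hj] using h j
    · rintro ⟨h1, h2⟩ j
      rcases eq_or_ne j i with rfl | hj
      · simpa using h2
      · have := h1 j
        simpa [Function.update_of_ne hj] using this
  rw [hpre, Measure.prod_prod, Measure.pi_pi]
  have hD : ∀ j, D (Function.update A i Set.univ j)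
      = Function.update (fun j => D (A j)) i 1 j := by
    intro j
    rcases eq_or_ne j i with rfl | hj
    · simp
    · simp [Function.update_of_ne hj]
  simp_rw [hD]
  rw [Finset.prod_update_of_mem (Finset.mem_univ i), one_mul,
    Finset.sdiff_singleton_eq_erase]
  exact Finset.prod_erase_mul _ _ (Finset.mem_univ i)

/-- **The replace-one identity (equation (eq1) in the paper's proof of Theorem 3).**
A randomized learning algorithm is a Markov kernel `K` from samples `S : Fin n → 𝒵` to
hypotheses `w : 𝒲`.  For an i.i.d. sample `S ~ D^⊗n`, a bounded measurable loss `ℓ`, expected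
risk `R(w) = ∫ ℓ(w, z) dD(z)` and empirical risk `R_S(w) = (1/n) ∑ j, ℓ(w, S j)`, the expected
generalization error `E_{S, W ~ K(S)}[R(W) − R_S(W)]` equals the average, over `i`, of the
expected difference `E_{S, Z_i'}[∫ ℓ(w, Z_i') dK(S)(w) − ∫ ℓ(w, Z_i') dK(S^i)(w)]`, where
`S^i` is `S` with its `i`-th coordinate replaced by an independent fresh example `Z_i' ~ D`. -/
theorem expected_generalization_error_eq_average_replace_one
    {𝒲 𝒵 : Type*} [MeasurableSpace 𝒲] [MeasurableSpace 𝒵]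
    (D : Measure 𝒵) [IsProbabilityMeasure D]
    (n : ℕ) (hn : 0 < n)
    (K : Kernel (Fin n → 𝒵) 𝒲) [IsMarkovKernel K]
    (ℓ : 𝒲 × 𝒵 → ℝ) (hℓmeas : Measurable ℓ)
    (hℓbdd : ∃ C : ℝ, ∀ p : 𝒲 × 𝒵, |ℓ p| ≤ C) :
    ∫ s, ∫ w, ((∫ z, ℓ (w, z) ∂D) - (1 / (n : ℝ)) * ∑ j : Fin n, ℓ (w, s j))
        ∂(K s) ∂(Measure.pi (fun _ : Fin n => D))
      = (1 / (n : ℝ)) * ∑ i : Fin n,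
          ∫ s, ∫ z', ((∫ w, ℓ (w, z') ∂(K s)) - ∫ w, ℓ (w, z') ∂(K (Function.update s i z')))
            ∂D ∂(Measure.pi (fun _ : Fin n => D)) := by
  classical
  obtain ⟨C, hC⟩ := hℓbdd
  set μn : Measure (Fin n → 𝒵) := Measure.pi (fun _ : Fin n => D) with hμn
  -- basic boundedness of the loss; `F s z = ∫ w, ℓ (w, z) ∂(K s)`
  set F : (Fin n → 𝒵) → 𝒵 → ℝ := fun s z => ∫ w, ℓ (w, z) ∂(K s) with hFdef
  -- joint measurability of F
  have hℓsm : StronglyMeasurable ℓ := hℓmeas.stronglyMeasurable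
  have hFmeas : StronglyMeasurable (fun p : (Fin n → 𝒵) × 𝒵 => F p.1 p.2) := by
    have h1 : StronglyMeasurable (fun q : ((Fin n → 𝒵) × 𝒵) × 𝒲 => ℓ (q.2, q.1.2)) :=
      hℓsm.comp_measurable (measurable_snd.prodMk (measurable_fst.snd))
    have h2 := h1.integral_kernel_prod_right' (κ := K.comap Prod.fst measurable_fst)
    simpa [Kernel.comap_apply] using h2
  have hFbdd : ∀ s z, |F s z| ≤ C := fun s z =>
    abs_integral_le_of_bound (K s) C (fun w => hC (w, z))
  -- measurability of derived maps
  have hFsz : ∀ s : Fin n → 𝒵, StronglyMeasurable (fun z : 𝒵 => F s z) :=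
    fun s => hFmeas.comp_measurable (measurable_const.prodMk measurable_id)
  have hIntF : StronglyMeasurable (fun s => ∫ z, F s z ∂D) :=
    hFmeas.integral_prod_right'
  have hGj : ∀ j : Fin n, StronglyMeasurable (fun s : Fin n → 𝒵 => F s (s j)) := fun j =>
    hFmeas.comp_measurable (measurable_id.prodMk (measurable_pi_apply j))
  have hu : ∀ i : Fin n,
      Measurable (fun p : (Fin n → 𝒵) × 𝒵 => Function.update p.1 i p.2) :=
    fun i => measurable_update'
  have hGu : ∀ i : Fin n, StronglyMeasurable
      (fun p : (Fin n → 𝒵) × 𝒵 => F (Function.update p.1 i p.2) ((Function.update p.1 i p.2) i)) :=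
    fun i => (hGj i).comp_measurable (hu i)
  -- integrability facts
  have hintF_D : ∀ s, Integrable (fun z => F s z) D := fun s =>
    integrable_of_abs_bound D (hFsz s).aestronglyMeasurable C (hFbdd s)
  have hintIntF : Integrable (fun s => ∫ z, F s z ∂D) μn :=
    integrable_of_abs_bound μn hIntF.aestronglyMeasurable C
      (fun s => abs_integral_le_of_bound D C (hFbdd s))
  have hintGj : ∀ j, Integrable (fun s => F s (s j)) μn := fun j =>
    integrable_of_abs_bound μn (hGj j).aestronglyMeasurable C (fun s => hFbdd s (s j))
  -- the key replace-one identity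
  have key : ∀ i : Fin n,
      ∫ s, ∫ z', F (Function.update s i z') z' ∂D ∂μn = ∫ s, F s (s i) ∂μn := by
    intro i
    have hrw : ∀ (s : Fin n → 𝒵) (z' : 𝒵),
        F (Function.update s i z') z'
          = F (Function.update s i z') ((Function.update s i z') i) := by
      intro s z'; rw [Function.update_self]
    have hint : Integrable
        (fun p : (Fin n → 𝒵) × 𝒵 =>
          F (Function.update p.1 i p.2) ((Function.update p.1 i p.2) i)) (μn.prod D) :=
      integrable_of_abs_bound _ (hGu i).aestronglyMeasurable C
        (fun p => hFbdd _ _)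
    calc ∫ s, ∫ z', F (Function.update s i z') z' ∂D ∂μn
        = ∫ s, ∫ z', F (Function.update s i z') ((Function.update s i z') i) ∂D ∂μn := by
          simp_rw [hrw]
      _ = ∫ p : (Fin n → 𝒵) × 𝒵,
            F (Function.update p.1 i p.2) ((Function.update p.1 i p.2) i) ∂(μn.prod D) :=
          (integral_prod _ hint).symm
      _ = ∫ t, F t (t i)
            ∂(Measure.map (fun p : (Fin n → 𝒵) × 𝒵 => Function.update p.1 i p.2) (μn.prod D)) :=
          (integral_map (hu i).aemeasurable (hGj i).aestronglyMeasurable).symm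
      _ = ∫ s, F s (s i) ∂μn := by rw [measurePreserving_replace_one D i]
  -- rewrite the LHS
  have hR : StronglyMeasurable (fun w : 𝒲 => ∫ z, ℓ (w, z) ∂D) :=
    hℓsm.integral_prod_right'
  have hRbdd : ∀ w, |∫ z, ℓ (w, z) ∂D| ≤ C := fun w =>
    abs_integral_le_of_bound D C (fun z => hC (w, z))
  have hEmp : ∀ s : Fin n → 𝒵, Measurable
      (fun w : 𝒲 => (1 / (n : ℝ)) * ∑ j : Fin n, ℓ (w, s j)) := by
    intro s
    exact (Finset.measurable_sum Finset.univ fun j _ =>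
      hℓmeas.comp (measurable_id.prodMk measurable_const)).const_mul _
  have hEmpBdd : ∀ (s : Fin n → 𝒵) (w : 𝒲),
      |(1 / (n : ℝ)) * ∑ j : Fin n, ℓ (w, s j)| ≤ C := by
    intro s w
    have h1 : |∑ j : Fin n, ℓ (w, s j)| ≤ (n : ℝ) * C := by
      calc |∑ j : Fin n, ℓ (w, s j)| ≤ ∑ j : Fin n, |ℓ (w, s j)| :=
            Finset.abs_sum_le_sum_abs _ _
        _ ≤ ∑ _j : Fin n, C := Finset.sum_le_sum fun j _ => hC _
        _ = (n : ℝ) * C := by simp [mul_comm]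
    have hn' : (0 : ℝ) < n := by exact_mod_cast hn
    rw [abs_mul, abs_of_nonneg (by positivity : (0:ℝ) ≤ 1 / (n : ℝ))]
    calc (1 / (n : ℝ)) * |∑ j : Fin n, ℓ (w, s j)| ≤ (1 / (n : ℝ)) * ((n : ℝ) * C) := by
          apply mul_le_mul_of_nonneg_left h1 (by positivity)
      _ = C := by field_simp
  -- pointwise (in s) rewriting of the inner integral on the LHS
  have hLHSinner : ∀ s : Fin n → 𝒵,
      ∫ w, ((∫ z, ℓ (w, z) ∂D) - (1 / (n : ℝ)) * ∑ j : Fin n, ℓ (w, s j)) ∂(K s)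
        = (∫ z, F s z ∂D) - (1 / (n : ℝ)) * ∑ j : Fin n, F s (s j) := by
    intro s
    have hint1 : Integrable (fun w => ∫ z, ℓ (w, z) ∂D) (K s) :=
      integrable_of_abs_bound _ hR.aestronglyMeasurable C hRbdd
    have hint2 : Integrable (fun w => (1 / (n : ℝ)) * ∑ j : Fin n, ℓ (w, s j)) (K s) :=
      integrable_of_abs_bound _ (hEmp s).aestronglyMeasurable C (hEmpBdd s)
    rw [integral_sub hint1 hint2]
    congr 1
    · -- Fubini for `(K s).prod D`
      have hintp : Integrable (fun p : 𝒲 × 𝒵 => ℓ (p.1, p.2)) ((K s).prod D) :=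
        integrable_of_abs_bound _
          (hℓsm.comp_measurable (measurable_fst.prodMk measurable_snd)).aestronglyMeasurable
          C (fun p => hC _)
      have hswap := integral_integral_swap (f := fun w z => ℓ (w, z)) (μ := K s) (ν := D)
        hintp
      simpa [hFdef] using hswap
    · rw [integral_const_mul]
      congr 1
      rw [integral_finset_sum]
      intro j _
      exact integrable_of_abs_bound _
        ((hℓsm.comp_measurable (measurable_id.prodMk measurable_const)).aestronglyMeasurable)
        C (fun w => hC _)
  have hLHS : ∫ s, ∫ w, ((∫ z, ℓ (w, z) ∂D) - (1 / (n : ℝ)) * ∑ j : Fin n, ℓ (w, s j))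
        ∂(K s) ∂μn
      = (∫ s, ∫ z, F s z ∂D ∂μn) - (1 / (n : ℝ)) * ∑ j : Fin n, ∫ s, F s (s j) ∂μn := by
    rw [integral_congr_ae (ae_of_all _ hLHSinner)]
    rw [integral_sub hintIntF]
    · congr 1
      rw [integral_const_mul]
      congr 1
      rw [integral_finset_sum _ (fun j _ => hintGj j)]
    · refine Integrable.const_mul ?_ _
      exact integrable_finset_sum _ (fun j _ => hintGj j)
  -- rewrite the RHS
  have hRHSinner : ∀ i : Fin n,
      ∫ s, ∫ z', ((∫ w, ℓ (w, z') ∂(K s)) - ∫ w, ℓ (w, z') ∂(K (Function.update s i z')))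
          ∂D ∂μn
        = (∫ s, ∫ z, F s z ∂D ∂μn) - ∫ s, F s (s i) ∂μn := by
    intro i
    have h4 : StronglyMeasurable
        (fun p : (Fin n → 𝒵) × 𝒵 => F (Function.update p.1 i p.2) p.2) := by
      have heq : (fun p : (Fin n → 𝒵) × 𝒵 => F (Function.update p.1 i p.2) p.2)
          = fun p => F (Function.update p.1 i p.2) ((Function.update p.1 i p.2) i) := by
        funext p; rw [Function.update_self]
      rw [heq]; exact hGu i
    have hinner : ∀ s : Fin n → 𝒵,
        ∫ z', ((∫ w, ℓ (w, z') ∂(K s)) - ∫ w, ℓ (w, z') ∂(K (Function.update s i z'))) ∂D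
          = (∫ z, F s z ∂D) - ∫ z', F (Function.update s i z') z' ∂D := by
      intro s
      have h2 : Integrable (fun z' => F (Function.update s i z') z') D := by
        refine integrable_of_abs_bound D ?_ C (fun z' => hFbdd _ _)
        exact (h4.comp_measurable
          ((measurable_const : Measurable fun _ : 𝒵 => s).prodMk
            measurable_id)).aestronglyMeasurable
      exact integral_sub (hintF_D s) h2
    rw [integral_congr_ae (ae_of_all _ hinner)]
    have h3 : Integrable (fun s => ∫ z', F (Function.update s i z') z' ∂D) μn := by
      refine integrable_of_abs_bound μn ?_ C
        (fun s => abs_integral_le_of_bound D C (fun z' => hFbdd _ _))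
      exact h4.integral_prod_right'.aestronglyMeasurable
    rw [integral_sub hintIntF h3, key i]
  -- assemble
  rw [hLHS]
  have : ∀ i : Fin n,
      ∫ s, ∫ z', ((∫ w, ℓ (w, z') ∂(K s)) - ∫ w, ℓ (w, z') ∂(K (Function.update s i z')))
          ∂D ∂μn
        = (∫ s, ∫ z, F s z ∂D ∂μn) - ∫ s, F s (s i) ∂μn := hRHSinner
  simp_rw [this]
  rw [Finset.sum_sub_distrib, Finset.sum_const, Finset.card_univ, Fintype.card_fin,
    mul_sub, nsmul_eq_mul]
  have hn' : (n : ℝ) ≠ 0 := by exact_mod_cast hn.ne'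
  have : (1 / (n : ℝ)) * ((n : ℝ) * ∫ s, ∫ z, F s z ∂D ∂μn) = ∫ s, ∫ z, F s z ∂D ∂μn := by
    field_simp
  rw [this]
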